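/- Let N ≥ 3 with N ≠ 4, and let U = (1/N)·(2·J_N − N·I_N) ∈ M_N(ℝ), where J_N is the all-ones matrix and I_N the identity. Then U does not locally maximize the 1-norm on the unitary group U(N); equivalently, the matrix K_N = √N·U is not a complex almost Hadamard matrix. -/

import Mathlib

open scoped Matrix
open Complex

lemma key_le (c s x y : ℝ) (h : c^2 + s^2 = 1) :
    |x| + |y| ≤ Real.sqrt ((c*x)^2+(s*y)^2) + Real.sqrt ((s*x)^2+(c*y)^2) := by
  set P := Real.sqrt ((c*x)^2+(s*y)^2) with hP
  set Q := Real.sqrt ((s*x)^2+(c*y)^2) with hQ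
  have hP0 : 0 ≤ P := Real.sqrt_nonneg _
  have hQ0 : 0 ≤ Q := Real.sqrt_nonneg _
  have hP2 : P^2 = (c*x)^2+(s*y)^2 := Real.sq_sqrt (by positivity)
  have hQ2 : Q^2 = (s*x)^2+(c*y)^2 := Real.sq_sqrt (by positivity)
  have h1 : |x| * |y| ≤ P*Q := by
    have hid : ((c*x)^2+(s*y)^2) * ((s*x)^2+(c*y)^2) = (x*y)^2 + (c*s*(x^2-y^2))^2 := by
      linear_combination x^2*y^2*(c^2+s^2+1) * h
    have hPQ : (P*Q)^2 = (x*y)^2 + (c*s*(x^2-y^2))^2 := by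
      rw [mul_pow, hP2, hQ2]; exact hid
    have h2 : (x*y)^2 ≤ (P*Q)^2 := by
      rw [hPQ]; nlinarith [sq_nonneg (c*s*(x^2-y^2))]
    calc |x| * |y| = Real.sqrt ((x*y)^2) := by rw [Real.sqrt_sq_eq_abs, abs_mul]
    _ ≤ Real.sqrt ((P*Q)^2) := Real.sqrt_le_sqrt h2
    _ = P*Q := Real.sqrt_sq (mul_nonneg hP0 hQ0)
  have hsum : P^2 + Q^2 = x^2 + y^2 := by
    rw [hP2, hQ2]; linear_combination (x^2 + y^2) * h
  nlinarith [h1, hsum, _root_.sq_abs x, _root_.sq_abs y, hP0, hQ0, abs_nonneg x, abs_nonneg y]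

lemma key_lt (c s x y : ℝ) (h : c^2 + s^2 = 1) (hcs : c*s ≠ 0) (hxy : x^2 ≠ y^2) :
    |x| + |y| < Real.sqrt ((c*x)^2+(s*y)^2) + Real.sqrt ((s*x)^2+(c*y)^2) := by
  set P := Real.sqrt ((c*x)^2+(s*y)^2) with hP
  set Q := Real.sqrt ((s*x)^2+(c*y)^2) with hQ
  have hP0 : 0 ≤ P := Real.sqrt_nonneg _
  have hQ0 : 0 ≤ Q := Real.sqrt_nonneg _
  have hP2 : P^2 = (c*x)^2+(s*y)^2 := Real.sq_sqrt (by positivity)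
  have hQ2 : Q^2 = (s*x)^2+(c*y)^2 := Real.sq_sqrt (by positivity)
  have hpos : 0 < (c*s*(x^2-y^2))^2 := by
    have h3 : x^2 - y^2 ≠ 0 := sub_ne_zero.mpr hxy
    positivity
  have h1 : |x| * |y| < P*Q := by
    have hid : ((c*x)^2+(s*y)^2) * ((s*x)^2+(c*y)^2) = (x*y)^2 + (c*s*(x^2-y^2))^2 := by
      linear_combination x^2*y^2*(c^2+s^2+1) * h
    have hPQ : (P*Q)^2 = (x*y)^2 + (c*s*(x^2-y^2))^2 := by
      rw [mul_pow, hP2, hQ2]; exact hid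
    have h2 : (x*y)^2 < (P*Q)^2 := by
      rw [hPQ]; linarith
    have h4 : |x*y| < P*Q := by
      have := Real.sqrt_lt_sqrt (sq_nonneg (x*y)) h2
      rwa [Real.sqrt_sq_eq_abs, Real.sqrt_sq (mul_nonneg hP0 hQ0)] at this
    calc |x| * |y| = |x*y| := (abs_mul x y).symm
    _ < P*Q := h4
  have hsum : P^2 + Q^2 = x^2 + y^2 := by
    rw [hP2, hQ2]; linear_combination (x^2 + y^2) * h
  nlinarith [h1, hsum, _root_.sq_abs x, _root_.sq_abs y, hP0, hQ0, abs_nonneg x, abs_nonneg y]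

theorem stmt15 (N : ℕ) (hN : 3 ≤ N) (hN4 : N ≠ 4) (U : Matrix (Fin N) (Fin N) ℂ)
    (hU : U = Matrix.of fun i j =>
      if i = j then ((2 - (N : ℂ)) / N) else (2 / (N : ℂ))) :
    ¬ ∃ ε > (0 : ℝ), ∀ V ∈ Matrix.unitaryGroup (Fin N) ℂ,
      (∀ i j, ‖V i j - U i j‖ < ε) →
        ∑ i, ∑ j, ‖V i j‖ ≤ ∑ i, ∑ j, ‖U i j‖ := by
  rintro ⟨ε, hε, h⟩
  set i0 : Fin N := ⟨0, by omega⟩ with hi0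
  set i1 : Fin N := ⟨1, by omega⟩ with hi1
  have hi01 : i0 ≠ i1 := by simp [hi0, hi1, Fin.ext_iff]
  have hN3 : (3:ℝ) ≤ N := by exact_mod_cast hN
  have hNpos : (0:ℝ) < N := by linarith
  have hNR : (N:ℝ) ≠ 0 := ne_of_gt hNpos
  have hNC : (N:ℂ) ≠ 0 := Nat.cast_ne_zero.mpr (by omega)
  -- rotation parameters
  set s : ℝ := min (ε/3) (1/2) with hsdef
  have hs0 : 0 < s := lt_min (by linarith) (by norm_num)
  have hs2 : s ≤ 1/2 := min_le_right _ _
  have hsε : s ≤ ε/3 := min_le_left _ _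
  set c : ℝ := Real.sqrt (1 - s^2) with hcdef
  have hc2 : c^2 = 1 - s^2 := Real.sq_sqrt (by nlinarith)
  have hcs1 : c^2 + s^2 = 1 := by rw [hc2]; ring
  have hc0 : 0 < c := Real.sqrt_pos.mpr (by nlinarith)
  have hc1 : c ≤ 1 := by nlinarith
  have hc3 : 1 - s^2 ≤ c := by nlinarith
  -- real entries of U
  set ar : ℝ := (2-(N:ℝ))/N with hardef
  set br : ℝ := 2/(N:ℝ) with hbrdef
  have hUre : ∀ i j : Fin N, U i j = (((if i = j then ar else br) : ℝ) : ℂ) := by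
    intro i j; rw [hU]; simp only [Matrix.of_apply, hardef, hbrdef]
    split <;> push_cast <;> ring
  have hUb : ∀ i j : Fin N, ‖U i j‖ ≤ 1 := by
    intro i j; rw [hUre, Complex.norm_real, Real.norm_eq_abs]
    split
    · rw [hardef, abs_div, abs_of_pos hNpos, div_le_one hNpos, abs_of_nonpos (by linarith)]
      linarith
    · rw [hbrdef, abs_div, abs_of_pos hNpos, div_le_one hNpos,
        _root_.abs_of_nonneg (by norm_num : (0:ℝ) ≤ 2)]
      linarith
  -- U is unitary
  have hUik : ∀ i k : Fin N, U i k = 2/(N:ℂ) - (if i = k then 1 else 0) := by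
    intro i k; rw [hUre]
    split
    · rw [hardef]; push_cast; field_simp
    · rw [hbrdef]; push_cast; ring
  have hUU : U * U = 1 := by
    ext i j
    rw [Matrix.mul_apply, Matrix.one_apply]
    have hterm : ∀ k : Fin N, U i k * U k j =
        4/(N:ℂ)^2 - (2/(N:ℂ)) * (if k = j then 1 else 0)
          - (2/(N:ℂ)) * (if i = k then 1 else 0)
          + (if i = k then (if i = j then (1:ℂ) else 0) else 0) := by
      intro k
      rw [hUik i k, hUik k j]
      by_cases h1 : i = k
      · subst h1
        by_cases h2 : i = j
        · subst h2; simp only [if_pos rfl]; simp; ring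
        · simp only [if_pos rfl, if_neg h2]; simp; ring
      · by_cases h2 : k = j
        · subst h2
          simp only [if_neg h1, if_pos rfl]; simp [h1]; ring
        · simp only [if_neg h1, if_neg h2]; simp [h1]; ring
    rw [Finset.sum_congr rfl (fun k _ => hterm k)]
    rw [Finset.sum_add_distrib, Finset.sum_sub_distrib, Finset.sum_sub_distrib,
      Finset.sum_const, ← Finset.mul_sum, ← Finset.mul_sum]
    rw [Finset.sum_ite_eq' Finset.univ j (fun _ => (1:ℂ)),
      Finset.sum_ite_eq Finset.univ i (fun _ => (1:ℂ)),
      Finset.sum_ite_eq Finset.univ i (fun _ => if i = j then (1:ℂ) else 0)]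
    simp only [Finset.mem_univ, if_true, Finset.card_univ, Fintype.card_fin,
      nsmul_eq_mul, mul_one]
    split_ifs <;> field_simp <;> ring
  have hstar : star U = U := by
    ext i j
    rw [Matrix.star_apply, hUre j i, hUre i j, Complex.star_def, Complex.conj_ofReal]
    by_cases hij : i = j
    · subst hij; rfl
    · rw [if_neg (fun hh => hij hh.symm), if_neg hij]
  have hUmem : U ∈ Matrix.unitaryGroup (Fin N) ℂ :=
    Matrix.mem_unitaryGroup_iff'.mpr (by rw [hstar, hUU])
  -- the rotation matrix R
  set R : Matrix (Fin N) (Fin N) ℂ := Matrix.of (fun i j =>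
    if i = i0 then (if j = i0 then (c:ℂ) else if j = i1 then Complex.I*(s:ℂ) else 0)
    else if i = i1 then (if j = i0 then Complex.I*(s:ℂ) else if j = i1 then (c:ℂ) else 0)
    else (if i = j then 1 else 0)) with hRdef
  have hRapp : ∀ i j : Fin N, R i j =
      if i = i0 then (if j = i0 then (c:ℂ) else if j = i1 then Complex.I*(s:ℂ) else 0)
      else if i = i1 then (if j = i0 then Complex.I*(s:ℂ) else if j = i1 then (c:ℂ) else 0)
      else (if i = j then 1 else 0) := fun i j => rfl
  have hcsC : (c:ℂ)^2 + (s:ℂ)^2 = 1 := by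
    have : ((c^2 + s^2 : ℝ) : ℂ) = ((1:ℝ):ℂ) := by rw [hcs1]
    push_cast at this; exact this
  have hR00 : R i0 i0 = (c:ℂ) := by simp [hRapp]
  have hR01 : R i0 i1 = Complex.I*(s:ℂ) := by simp [hRapp, Ne.symm hi01]
  have hR10 : R i1 i0 = Complex.I*(s:ℂ) := by simp [hRapp, hi01.symm]
  have hR11 : R i1 i1 = (c:ℂ) := by simp [hRapp, hi01.symm, Ne.symm hi01]
  have hR0k : ∀ j : Fin N, j ≠ i0 → j ≠ i1 → R i0 j = 0 := by
    intro j h1 h2; simp [hRapp, h1, h2]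
  have hR1k : ∀ j : Fin N, j ≠ i0 → j ≠ i1 → R i1 j = 0 := by
    intro j h1 h2; simp [hRapp, hi01.symm, h1, h2]
  have hRk : ∀ i : Fin N, i ≠ i0 → i ≠ i1 → ∀ j : Fin N,
      R i j = if i = j then 1 else 0 := by
    intro i h1 h2 j; simp [hRapp, h1, h2]
  have hstarc : star ((c:ℂ)) = (c:ℂ) := by
    simp [Complex.star_def, Complex.conj_ofReal]
  have hstarIs : star (Complex.I*(s:ℂ)) = -(Complex.I*(s:ℂ)) := by
    simp [Complex.star_def, map_mul, Complex.conj_I, Complex.conj_ofReal]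
  have hRmem : R ∈ Matrix.unitaryGroup (Fin N) ℂ := by
    rw [Matrix.mem_unitaryGroup_iff']
    ext i j
    rw [Matrix.mul_apply, Matrix.one_apply]
    simp only [Matrix.star_apply]
    by_cases hi : i = i0 ∨ i = i1
    · have hz : ∀ k ∈ Finset.univ, k ≠ i0 ∧ k ≠ i1 → star (R k i) * R k j = 0 := by
        intro k _ hk
        have hki : k ≠ i := by rcases hi with h | h <;> subst h <;> [exact hk.1; exact hk.2]
        rw [hRk k hk.1 hk.2 i, if_neg hki]
        simp
      rw [Finset.sum_eq_add i0 i1 hi01 hz (by simp) (by simp)]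
      rcases hi with h | h <;> subst h
      · by_cases hj0 : j = i0
        · subst hj0
          rw [hR00, hR10, hstarc, hstarIs, if_pos rfl]
          linear_combination hcsC - (s:ℂ)^2 * Complex.I_sq
        · by_cases hj1 : j = i1
          · subst hj1
            rw [hR00, hR01, hR10, hR11, hstarc, hstarIs, if_neg hi01]
            ring
          · rw [hR0k j hj0 hj1, hR1k j hj0 hj1, if_neg (by intro hh; exact hj0 hh.symm)]
            ring
      · by_cases hj0 : j = i0
        · subst hj0
          rw [hR01, hR00, hR11, hR10, hstarc, hstarIs, if_neg (Ne.symm hi01)]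
          ring
        · by_cases hj1 : j = i1
          · subst hj1
            rw [hR01, hR11, hstarc, hstarIs, if_pos rfl]
            linear_combination hcsC - (s:ℂ)^2 * Complex.I_sq
          · rw [hR0k j hj0 hj1, hR1k j hj0 hj1, if_neg (by intro hh; exact hj1 hh.symm)]
            ring
    · push_neg at hi
      have hz : ∀ k ∈ Finset.univ, k ≠ i → star (R k i) * R k j = 0 := by
        intro k _ hki
        by_cases hk0 : k = i0
        · subst hk0; rw [hR0k i hi.1 hi.2]; simp
        · by_cases hk1 : k = i1
          · subst hk1; rw [hR1k i hi.1 hi.2]; simp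
          · rw [hRk k hk0 hk1 i, if_neg hki]; simp
      rw [Finset.sum_eq_single i (fun k _ hki => hz k (Finset.mem_univ k) hki) (by simp)]
      rw [hRk i hi.1 hi.2 i, if_pos rfl, hRk i hi.1 hi.2 j]
      simp
  have hVmem : R * U ∈ Matrix.unitaryGroup (Fin N) ℂ := mul_mem hRmem hUmem
  -- entries of V = R * U
  have hV0 : ∀ j : Fin N, (R * U) i0 j = (c:ℂ) * U i0 j + (Complex.I*(s:ℂ)) * U i1 j := by
    intro j
    rw [Matrix.mul_apply]
    rw [Finset.sum_eq_add i0 i1 hi01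
      (fun k _ hk => by rw [hR0k k hk.1 hk.2]; ring) (by simp) (by simp)]
    rw [hR00, hR01]
  have hV1 : ∀ j : Fin N, (R * U) i1 j = (Complex.I*(s:ℂ)) * U i0 j + (c:ℂ) * U i1 j := by
    intro j
    rw [Matrix.mul_apply]
    rw [Finset.sum_eq_add i0 i1 hi01
      (fun k _ hk => by rw [hR1k k hk.1 hk.2]; ring) (by simp) (by simp)]
    rw [hR10, hR11]
  have hVo : ∀ i : Fin N, i ≠ i0 → i ≠ i1 → ∀ j : Fin N, (R * U) i j = U i j := by
    intro i h1 h2 j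
    rw [Matrix.mul_apply]
    rw [Finset.sum_eq_single i
      (fun k _ hki => by rw [hRk i h1 h2 k, if_neg (Ne.symm hki)]; ring) (by simp)]
    rw [hRk i h1 h2 i, if_pos rfl, one_mul]
  -- closeness of V to U
  have habsIs : ‖Complex.I*(s:ℂ)‖ = s := by
    rw [norm_mul, Complex.norm_I, Complex.norm_real, Real.norm_eq_abs, one_mul, _root_.abs_of_pos hs0]
  have habsc1 : ‖(c:ℂ) - 1‖ = 1 - c := by
    have : ((c:ℂ) - 1) = (((c - 1 : ℝ)) : ℂ) := by push_cast; ring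
    rw [this, Complex.norm_real, Real.norm_eq_abs, abs_of_nonpos (by linarith)]
    ring
  have hbound : (1 - c) + s < ε := by nlinarith
  have hclose : ∀ i j : Fin N, ‖(R * U) i j - U i j‖ < ε := by
    intro i j
    by_cases hii : i = i0
    · subst hii
      rw [hV0 j]
      have e : (c:ℂ) * U i0 j + (Complex.I*(s:ℂ)) * U i1 j - U i0 j
          = ((c:ℂ) - 1) * U i0 j + (Complex.I*(s:ℂ)) * U i1 j := by ring
      rw [e]
      calc ‖((c:ℂ) - 1) * U i0 j + (Complex.I*(s:ℂ)) * U i1 j‖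
          ≤ ‖((c:ℂ) - 1) * U i0 j‖
            + ‖(Complex.I*(s:ℂ)) * U i1 j‖ := norm_add_le _ _
        _ = (1 - c) * ‖U i0 j‖ + s * ‖U i1 j‖ := by
            rw [norm_mul, habsc1, norm_mul, habsIs]
        _ ≤ (1 - c) * 1 + s * 1 := by
            gcongr <;> first | exact hUb _ _ | linarith
        _ = (1 - c) + s := by ring
        _ < ε := hbound
    · by_cases hii1 : i = i1
      · subst hii1
        rw [hV1 j]
        have e : (Complex.I*(s:ℂ)) * U i0 j + (c:ℂ) * U i1 j - U i1 j
            = (Complex.I*(s:ℂ)) * U i0 j + ((c:ℂ) - 1) * U i1 j := by ring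
        rw [e]
        calc ‖(Complex.I*(s:ℂ)) * U i0 j + ((c:ℂ) - 1) * U i1 j‖
            ≤ ‖(Complex.I*(s:ℂ)) * U i0 j‖
              + ‖((c:ℂ) - 1) * U i1 j‖ := norm_add_le _ _
          _ = s * ‖U i0 j‖ + (1 - c) * ‖U i1 j‖ := by
              rw [norm_mul, habsIs, norm_mul, habsc1]
          _ ≤ s * 1 + (1 - c) * 1 := by
              gcongr <;> first | exact hUb _ _ | linarith
          _ = (1 - c) + s := by ring
          _ < ε := hbound
      · rw [hVo i hii hii1 j]
        simpa using hε
  -- modulus formulas for the two changed rows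
  have habs0 : ∀ j : Fin N, ‖(R * U) i0 j‖
      = Real.sqrt ((c * (if i0 = j then ar else br))^2 + (s * (if i1 = j then ar else br))^2) := by
    intro j
    rw [hV0 j, hUre i0 j, hUre i1 j]
    have e : (c:ℂ) * ((if i0 = j then ar else br : ℝ) : ℂ)
        + (Complex.I*(s:ℂ)) * ((if i1 = j then ar else br : ℝ) : ℂ)
        = ((c * (if i0 = j then ar else br) : ℝ) : ℂ)
          + ((s * (if i1 = j then ar else br) : ℝ) : ℂ) * Complex.I := by push_cast; ring
    rw [e, Complex.norm_add_mul_I]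
  have habs1 : ∀ j : Fin N, ‖(R * U) i1 j‖
      = Real.sqrt ((s * (if i0 = j then ar else br))^2 + (c * (if i1 = j then ar else br))^2) := by
    intro j
    rw [hV1 j, hUre i0 j, hUre i1 j]
    have e : (Complex.I*(s:ℂ)) * ((if i0 = j then ar else br : ℝ) : ℂ)
        + (c:ℂ) * ((if i1 = j then ar else br : ℝ) : ℂ)
        = ((c * (if i1 = j then ar else br) : ℝ) : ℂ)
          + ((s * (if i0 = j then ar else br) : ℝ) : ℂ) * Complex.I := by push_cast; ring
    rw [e, Complex.norm_add_mul_I]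
    rw [add_comm ((s * (if i0 = j then ar else br))^2)]
  -- column sum comparison
  have hdiff : ∀ j : Fin N,
      ∑ i, ‖(R * U) i j‖ - ∑ i, ‖U i j‖
      = (Real.sqrt ((c * (if i0 = j then ar else br))^2 + (s * (if i1 = j then ar else br))^2)
          + Real.sqrt ((s * (if i0 = j then ar else br))^2 + (c * (if i1 = j then ar else br))^2))
        - (|if i0 = j then ar else br| + |if i1 = j then ar else br|) := by
    intro j
    rw [← Finset.sum_sub_distrib]
    rw [Finset.sum_eq_add i0 i1 hi01
      (fun k _ hk => by rw [hVo k hk.1 hk.2 j]; ring) (by simp) (by simp)]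
    rw [habs0 j, habs1 j, hUre i0 j, hUre i1 j, Complex.norm_real, Real.norm_eq_abs, Complex.norm_real, Real.norm_eq_abs]
    ring
  have hcol_le : ∀ j : Fin N, ∑ i, ‖U i j‖ ≤ ∑ i, ‖(R * U) i j‖ := by
    intro j
    have hk := key_le c s (if i0 = j then ar else br) (if i1 = j then ar else br) hcs1
    have hd := hdiff j
    linarith
  have harbr : ar^2 ≠ br^2 := by
    intro hcon
    have h4 : (N:ℝ) ≠ 4 := by
      intro hh
      exact hN4 (by exact_mod_cast hh)
    rw [hardef, hbrdef, div_pow, div_pow, div_eq_div_iff (by positivity) (by positivity)] at hcon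
    have h0 : (N:ℝ) * ((N:ℝ) - 4) * ((N:ℝ)^2) = 0 := by linear_combination hcon
    rcases mul_eq_zero.mp h0 with h5 | h5
    · rcases mul_eq_zero.mp h5 with h6 | h6
      · linarith
      · exact h4 (by linarith)
    · exact (ne_of_gt (pow_pos hNpos 2)) h5
  have hcol_lt : ∑ i, ‖U i i0‖ < ∑ i, ‖(R * U) i i0‖ := by
    have hk := key_lt c s (if i0 = i0 then ar else br) (if i1 = i0 then ar else br) hcs1
      (ne_of_gt (mul_pos hc0 hs0))
      (by rw [if_pos rfl, if_neg (Ne.symm hi01)]; exact harbr)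
    have hd := hdiff i0
    linarith
  -- conclude
  have hUswap : ∑ i, ∑ j, ‖U i j‖ = ∑ j, ∑ i, ‖U i j‖ :=
    Finset.sum_comm
  have hVswap : ∑ i, ∑ j, ‖(R * U) i j‖
      = ∑ j, ∑ i, ‖(R * U) i j‖ := Finset.sum_comm
  have hlt : ∑ i, ∑ j, ‖U i j‖ < ∑ i, ∑ j, ‖(R * U) i j‖ := by
    rw [hUswap, hVswap]
    exact Finset.sum_lt_sum (fun j _ => hcol_le j) ⟨i0, Finset.mem_univ _, hcol_lt⟩
  exact absurd (h (R * U) hVmem hclose) (not_le.mpr hlt)
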